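/- Let G = SLₙ(ℤ) act on row vectors Um_{1×n}(ℤ) (vectors in ℤⁿ with coprime entries) by v·g⁻¹. Order ℤⁿ by N(v) = (‖v‖_∞, m(v), n − g(v), ‖v‖₁) lexicographically, where m(v) counts maximal coordinates and g(v) counts good coordinates. If v ∈ Um_{1×n}(ℤ) with ‖v‖_∞ ≥ 2, then there exist at least ⌊(n+1)/3⌋ pairs (w, E) where E is an elementary matrix E_{ij}(±1) and w = v·E satisfies w < v. -/
import Mathlib


/-- The sup-norm `‖x‖_∞` of `x ∈ ℤⁿ`. -/
def normInf (n : ℕ) (x : Fin n → ℤ) : ℕ := Finset.univ.sup fun i => (x i).natAbs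

/-- `m(x)`: the number of maximal coordinates. -/
def maxCount (n : ℕ) (x : Fin n → ℤ) : ℕ :=
  (Finset.univ.filter fun i => (x i).natAbs = normInf n x).card

/-- `g(x)`: the number of good coordinates. -/
def goodCount (n : ℕ) (x : Fin n → ℤ) : ℕ :=
  (Finset.univ.filter fun i => 0 < (x i).natAbs ∧ (x i).natAbs < normInf n x).card

/-- The `ℓ¹`-norm `‖x‖₁`. -/
def norm1 (n : ℕ) (x : Fin n → ℤ) : ℕ := ∑ i, (x i).natAbs

/-- `x < y` iff `N(x) < N(y)` lexicographically, where
`N(x) = (‖x‖_∞, m(x), n − g(x), ‖x‖₁)`. -/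
def vecLt (n : ℕ) (x y : Fin n → ℤ) : Prop :=
  normInf n x < normInf n y ∨ (normInf n x = normInf n y ∧
    (maxCount n x < maxCount n y ∨ (maxCount n x = maxCount n y ∧
      (n - goodCount n x < n - goodCount n y ∨ (n - goodCount n x = n - goodCount n y ∧
        norm1 n x < norm1 n y)))))

lemma normInf_le_iff (n : ℕ) (x : Fin n → ℤ) (M : ℕ) :
    normInf n x ≤ M ↔ ∀ k, (x k).natAbs ≤ M := by
  simp [normInf, Finset.sup_le_iff]

lemma le_normInf (n : ℕ) (x : Fin n → ℤ) (k : Fin n) : (x k).natAbs ≤ normInf n x :=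
  Finset.le_sup (f := fun k => (x k).natAbs) (Finset.mem_univ k)

lemma exists_max (n : ℕ) (x : Fin n → ℤ) (hn : 0 < normInf n x) :
    ∃ k, (x k).natAbs = normInf n x := by
  rcases Nat.eq_zero_or_pos n with rfl | hpos
  · simp [normInf] at hn
  · obtain ⟨k, -, hk⟩ := Finset.exists_mem_eq_sup (Finset.univ : Finset (Fin n))
      ⟨⟨0, hpos⟩, Finset.mem_univ _⟩ (fun k => (x k).natAbs)
    exact ⟨k, hk.symm⟩

lemma move_zero (n : ℕ) (v : Fin n → ℤ) (i j : Fin n) (ε : ℤ)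
    (hε : ε = 1 ∨ ε = -1) (hj : v j = 0)
    (hi1 : 0 < (v i).natAbs) (hi2 : (v i).natAbs < normInf n v) :
    vecLt n (Function.update v j (v j + ε * v i)) v := by
  classical
  have hMpos : 0 < normInf n v := lt_trans hi1 hi2
  obtain ⟨k₀, hk₀⟩ := exists_max n v hMpos
  set w := Function.update v j (v j + ε * v i) with hw
  have hwj : (w j).natAbs = (v i).natAbs := by
    simp only [hw, Function.update_self, hj, zero_add]
    rcases hε with rfl | rfl <;> simp
  have hwk : ∀ k, k ≠ j → w k = v k := fun k hk => Function.update_of_ne hk _ _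
  have hk₀j : k₀ ≠ j := by
    intro h; rw [h, hj] at hk₀; simp at hk₀; omega
  have hninf : normInf n w = normInf n v := by
    apply le_antisymm
    · rw [normInf_le_iff]
      intro k
      by_cases hk : k = j
      · subst hk; omega
      · rw [hwk k hk]; exact le_normInf n v k
    · calc normInf n v = (w k₀).natAbs := by rw [hwk k₀ hk₀j, hk₀]
        _ ≤ normInf n w := le_normInf n w k₀
  have hmax : maxCount n w = maxCount n v := by
    unfold maxCount
    congr 1
    apply Finset.filter_congr
    intro k _
    by_cases hk : k = j
    · subst hk
      rw [hninf]
      have h1 : (w k).natAbs < normInf n v := by omega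
      have h2 : (v k).natAbs < normInf n v := by rw [hj]; simpa using hMpos
      constructor <;> intro h <;> omega
    · rw [hwk k hk, hninf]
  have hjnot : j ∉ Finset.univ.filter fun k => 0 < (v k).natAbs ∧ (v k).natAbs < normInf n v := by
    simp [hj]
  have hgood : goodCount n w = goodCount n v + 1 := by
    unfold goodCount
    rw [show (Finset.univ.filter fun k => 0 < (w k).natAbs ∧ (w k).natAbs < normInf n w)
        = insert j (Finset.univ.filter fun k => 0 < (v k).natAbs ∧ (v k).natAbs < normInf n v) by
      ext k
      simp only [Finset.mem_insert, Finset.mem_filter, Finset.mem_univ, true_and]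
      by_cases hk : k = j
      · subst hk
        rw [hninf]
        constructor
        · intro _; exact Or.inl rfl
        · intro _; exact ⟨by omega, by omega⟩
      · rw [hwk k hk, hninf]
        simp [hk]]
    rw [Finset.card_insert_of_notMem hjnot]
  have hgclt : goodCount n v < n := by
    have hss : (Finset.univ.filter fun k => 0 < (v k).natAbs ∧ (v k).natAbs < normInf n v)
        ⊂ Finset.univ := by
      rw [Finset.ssubset_univ_iff]
      intro h
      have hm := Finset.mem_univ j
      rw [← h] at hm
      exact hjnot hm
    have := Finset.card_lt_card hss
    simpa [goodCount, Finset.card_univ] using this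
  exact Or.inr ⟨hninf, Or.inr ⟨hmax, Or.inl (by omega)⟩⟩

lemma move_max (n : ℕ) (v : Fin n → ℤ) (i j : Fin n) (ε : ℤ)
    (hε : ε = 1 ∨ ε = -1)
    (hj : (v j).natAbs = normInf n v)
    (hi1 : 0 < (v i).natAbs) (hi2 : (v i).natAbs < normInf n v)
    (hsign : ε * v i * v j ≤ 0) :
    vecLt n (Function.update v j (v j + ε * v i)) v := by
  classical
  set w := Function.update v j (v j + ε * v i) with hw
  have hwk : ∀ k, k ≠ j → w k = v k := fun k hk => Function.update_of_ne hk _ _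
  have hvi : v i ≠ 0 := by intro h; rw [h] at hi1; simp at hi1
  have hvj : v j ≠ 0 := by intro h; rw [h] at hj; simp at hj; omega
  have hwj : (w j).natAbs < normInf n v := by
    simp only [hw, Function.update_self]
    have hprod : ε * v i * v j < 0 := by
      rcases lt_or_eq_of_le hsign with h | h
      · exact h
      · exfalso
        have : ε ≠ 0 := by rcases hε with rfl | rfl <;> norm_num
        rcases mul_eq_zero.mp h with h' | h'
        · rcases mul_eq_zero.mp h' with h'' | h''
          · exact this h''
          · exact hvi h''
        · exact hvj h'
    rcases hε with rfl | rfl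
    · simp only [one_mul] at hprod ⊢
      rcases mul_neg_iff.mp hprod with ⟨ha, hb⟩ | ⟨ha, hb⟩ <;> omega
    · have hpos : 0 < v i * v j := by nlinarith [hprod]
      rcases mul_pos_iff.mp hpos with ⟨ha, hb⟩ | ⟨ha, hb⟩ <;> omega
  have hle : normInf n w ≤ normInf n v := by
    rw [normInf_le_iff]
    intro k
    by_cases hk : k = j
    · subst hk; omega
    · rw [hwk k hk]; exact le_normInf n v k
  rcases lt_or_eq_of_le hle with h | h
  · exact Or.inl h
  · refine Or.inr ⟨h, Or.inl ?_⟩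
    have hjmem : j ∈ Finset.univ.filter fun k => (v k).natAbs = normInf n v := by
      simp [hj]
    have hset : (Finset.univ.filter fun k => (w k).natAbs = normInf n w)
        = (Finset.univ.filter fun k => (v k).natAbs = normInf n v).erase j := by
      ext k
      simp only [Finset.mem_erase, Finset.mem_filter, Finset.mem_univ, true_and]
      by_cases hk : k = j
      · subst hk
        rw [h]
        constructor
        · intro hc; omega
        · intro hc; exact absurd rfl hc.1
      · rw [hwk k hk, h]
        simp [hk]
    unfold maxCount
    rw [hset, Finset.card_erase_of_mem hjmem]
    have : 0 < (Finset.univ.filter fun k => (v k).natAbs = normInf n v).card :=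
      Finset.card_pos.mpr ⟨j, hjmem⟩
    omega

open Classical in
/-- if `v ∈ Um_{1×n}(ℤ)` is a unimodular row vector with `‖v‖_∞ ≥ 2`, then
there are at least `⌊(n+1)/3⌋` elementary matrices `E = E_{ij}(±1)` (encoded by the triple
`(i, j, ε)` with `i ≠ j`, `ε = ±1`; the right action of `E` adds `ε·(coordinate i)` to
coordinate `j`) such that `w = v·E` satisfies `w < v` in the lexicographic `N`-order. -/
theorem stmt_9 (n : ℕ) (v : Fin n → ℤ)
    (huni : Finset.univ.gcd v = 1)
    (h2 : 2 ≤ normInf n v) :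
    (n + 1) / 3 ≤
      ((Finset.univ ×ˢ Finset.univ ×ˢ ({1, -1} : Finset ℤ)).filter
        (fun p : Fin n × Fin n × ℤ => p.1 ≠ p.2.1 ∧
          vecLt n (Function.update v p.2.1 (v p.2.1 + p.2.2 * v p.1)) v)).card := by
  classical
  set T := ((Finset.univ ×ˢ Finset.univ ×ˢ ({1, -1} : Finset ℤ)).filter
        (fun p : Fin n × Fin n × ℤ => p.1 ≠ p.2.1 ∧
          vecLt n (Function.update v p.2.1 (v p.2.1 + p.2.2 * v p.1)) v)) with hT
  have hMpos : 0 < normInf n v := by omega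
  -- the three coordinate classes
  set Smax := Finset.univ.filter fun k => (v k).natAbs = normInf n v with hSmax
  set Sgood := Finset.univ.filter fun k => 0 < (v k).natAbs ∧ (v k).natAbs < normInf n v
    with hSgood
  set Szero := Finset.univ.filter fun k => v k = 0 with hSzero
  obtain ⟨k₀, hk₀⟩ := exists_max n v hMpos
  have hmpos : 0 < Smax.card := Finset.card_pos.mpr ⟨k₀, by simp [hSmax, hk₀]⟩
  -- g ≥ 1 by unimodularity
  have hgpos : 0 < Sgood.card := by
    rw [Finset.card_pos]
    by_contra hempty
    rw [Finset.not_nonempty_iff_eq_empty] at hempty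
    have hdvd : (normInf n v : ℤ) ∣ Finset.univ.gcd v := by
      apply Finset.dvd_gcd
      intro k _
      have hk : ¬ (0 < (v k).natAbs ∧ (v k).natAbs < normInf n v) := by
        intro hc
        have : k ∈ Sgood := by
          simp only [hSgood, Finset.mem_filter, Finset.mem_univ, true_and]; exact hc
        rw [hempty] at this
        exact absurd this (Finset.notMem_empty k)
      have hle := le_normInf n v k
      have : (v k).natAbs = 0 ∨ (v k).natAbs = normInf n v := by omega
      rcases this with h | h
      · rw [Int.natAbs_eq_zero] at h
        rw [h]; exact dvd_zero _
      · rcases Int.natAbs_eq (v k) with h' | h' <;>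
          [rw [h', h]; rw [h', h]] <;> simp
    rw [huni] at hdvd
    have := Int.le_of_dvd one_pos hdvd
    omega
  -- partition: m + g + z = n
  have hpart : Smax.card + Sgood.card + Szero.card = n := by
    have hdisj1 : Disjoint Smax Sgood := by
      rw [Finset.disjoint_left]
      intro k hk1 hk2
      simp [hSmax] at hk1
      simp [hSgood] at hk2
      omega
    have hdisj2 : Disjoint (Smax ∪ Sgood) Szero := by
      rw [Finset.disjoint_left]
      intro k hk1 hk2
      simp [hSzero] at hk2
      rcases Finset.mem_union.mp hk1 with h | h
      · simp [hSmax, hk2] at h; omega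
      · simp [hSgood, hk2] at h
    have hcov : Smax ∪ Sgood ∪ Szero = Finset.univ := by
      ext k
      simp only [Finset.mem_union, hSmax, hSgood, hSzero, Finset.mem_filter,
        Finset.mem_univ, true_and, iff_true]
      have hle := le_normInf n v k
      have h0 : v k = 0 ↔ (v k).natAbs = 0 := Int.natAbs_eq_zero.symm
      omega
    calc Smax.card + Sgood.card + Szero.card
        = (Smax ∪ Sgood).card + Szero.card := by
          rw [Finset.card_union_of_disjoint hdisj1]
      _ = (Smax ∪ Sgood ∪ Szero).card := (Finset.card_union_of_disjoint hdisj2).symm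
      _ = n := by rw [hcov, Finset.card_univ, Fintype.card_fin]
  -- the two families of decreasing moves
  set S1 := (Sgood ×ˢ Smax).image
    (fun p : Fin n × Fin n => (p.1, p.2, if 0 ≤ v p.1 * v p.2 then (-1 : ℤ) else 1)) with hS1
  set S2 := Sgood ×ˢ Szero ×ˢ ({1, -1} : Finset ℤ) with hS2
  have hS1card : S1.card = Sgood.card * Smax.card := by
    rw [hS1, Finset.card_image_of_injective _ (fun p q hpq => by
      simp only [Prod.mk.injEq] at hpq
      exact Prod.ext hpq.1 hpq.2.1), Finset.card_product]
  have hS2card : S2.card = Sgood.card * (Szero.card * 2) := by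
    rw [hS2, Finset.card_product, Finset.card_product]
    norm_num
  have hS1T : S1 ⊆ T := by
    intro p hp
    rw [hS1, Finset.mem_image] at hp
    obtain ⟨q, hq, rfl⟩ := hp
    rw [Finset.mem_product] at hq
    obtain ⟨hqi, hqj⟩ := hq
    simp only [hSgood, Finset.mem_filter, Finset.mem_univ, true_and] at hqi
    simp only [hSmax, Finset.mem_filter, Finset.mem_univ, true_and] at hqj
    rw [hT, Finset.mem_filter]
    have he : (if 0 ≤ v q.1 * v q.2 then (-1 : ℤ) else 1) = 1 ∨
        (if 0 ≤ v q.1 * v q.2 then (-1 : ℤ) else 1) = -1 := by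
      by_cases hs : 0 ≤ v q.1 * v q.2 <;> simp [hs]
    have hsign : (if 0 ≤ v q.1 * v q.2 then (-1 : ℤ) else 1) * v q.1 * v q.2 ≤ 0 := by
      by_cases hs : 0 ≤ v q.1 * v q.2
      · rw [if_pos hs, neg_one_mul, neg_mul]; linarith
      · rw [if_neg hs, one_mul]; push_neg at hs; linarith
    refine ⟨?_, ?_, ?_⟩
    · by_cases hs : 0 ≤ v q.1 * v q.2 <;> simp [Finset.mem_product, hs]
    · intro h
      have h' : q.1 = q.2 := h
      rw [h'] at hqi
      omega
    · exact move_max n v q.1 q.2 _ he hqj hqi.1 hqi.2 hsign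
  have hS2T : S2 ⊆ T := by
    intro p hp
    rw [hS2, Finset.mem_product, Finset.mem_product] at hp
    obtain ⟨hpi, hpj, hpe⟩ := hp
    simp only [hSgood, Finset.mem_filter, Finset.mem_univ, true_and] at hpi
    simp only [hSzero, Finset.mem_filter, Finset.mem_univ, true_and] at hpj
    rw [hT, Finset.mem_filter]
    refine ⟨?_, ?_, ?_⟩
    · simp [Finset.mem_product]
      simpa using hpe
    · intro h
      rw [h, hpj] at hpi
      simp at hpi
    · apply move_zero n v p.1 p.2.1 p.2.2 _ hpj hpi.1 hpi.2
      simpa using hpe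
  have hdisjS : Disjoint S1 S2 := by
    rw [Finset.disjoint_left]
    intro p hp1 hp2
    rw [hS1, Finset.mem_image] at hp1
    obtain ⟨q, hq, rfl⟩ := hp1
    rw [Finset.mem_product] at hq
    simp only [hSmax, Finset.mem_filter, Finset.mem_univ, true_and] at hq
    rw [hS2, Finset.mem_product, Finset.mem_product] at hp2
    obtain ⟨-, hpj, -⟩ := hp2
    simp only [hSzero, Finset.mem_filter, Finset.mem_univ, true_and] at hpj
    have := hq.2
    rw [hpj] at this
    simp at this
    omega
  have hcard : Sgood.card * Smax.card + Sgood.card * (Szero.card * 2) ≤ T.card := by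
    calc Sgood.card * Smax.card + Sgood.card * (Szero.card * 2)
        = S1.card + S2.card := by rw [hS1card, hS2card]
      _ = (S1 ∪ S2).card := (Finset.card_union_of_disjoint hdisjS).symm
      _ ≤ T.card := Finset.card_le_card (Finset.union_subset hS1T hS2T)
  have harith : n + 1 ≤ 3 * (Sgood.card * Smax.card + Sgood.card * (Szero.card * 2)) := by
    nlinarith [hmpos, hgpos, hpart]
  calc (n + 1) / 3 ≤ (3 * (Sgood.card * Smax.card + Sgood.card * (Szero.card * 2))) / 3 :=
        Nat.div_le_div_right harith
    _ = Sgood.card * Smax.card + Sgood.card * (Szero.card * 2) := by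
        rw [Nat.mul_div_cancel_left _ (by norm_num)]
    _ ≤ T.card := hcard
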